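/- The road speed satisfies the two-sided bound 2√D/(2+μ) ≤ inf_{q>0} H_r(q)/q ≤ D/√(D−1). -/

import Mathlib

open Real Filter Set

noncomputable section

/-- The field Lagrangian `L_f(v₁,v₂) = (v₁² + v₂²)/4 − 1`. -/
def Lf (v₁ v₂ : ℝ) : ℝ := (v₁ ^ 2 + v₂ ^ 2) / 4 - 1

/-- The effective road Hamiltonian `H_r(q) = q² + (p_q)² + 1` built from the
critical-slope function `pq`. -/
def Hr (pq : ℝ → ℝ) (q : ℝ) : ℝ := q ^ 2 + pq q ^ 2 + 1

/-- The road Lagrangian: the Legendre transform of `Hr`. -/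
def Lr (pq : ℝ → ℝ) (v : ℝ) : ℝ := ⨆ q : ℝ, (v * q - Hr pq q)

/-- `pq` assigns to each `q` the critical slope `p_q`: it equals `0` when
`(D−1)q² ≤ 1`, and otherwise it is the unique positive root of
`(D−1)q² = p² + 1 + μp/(κν + p)`. -/
def IsCriticalSlope (D μ ν κ : ℝ) (pq : ℝ → ℝ) : Prop :=
  ∀ q : ℝ,
    ((D - 1) * q ^ 2 ≤ 1 → pq q = 0) ∧
    (1 < (D - 1) * q ^ 2 →
      0 < pq q ∧ (D - 1) * q ^ 2 = pq q ^ 2 + 1 + μ * pq q / (κ * ν + pq q))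

/-- The set of candidate costs in the control problem at a point `(x,y)` with
`x ≥ 0`, `y ≥ 0`: the pure-field cost, the broken road-then-field costs, and
(when `y = 0`) the pure-road cost. -/
def Jset (pq : ℝ → ℝ) (x y : ℝ) : Set ℝ :=
  {Lf x y} ∪
    {c | ∃ τ z : ℝ, 0 < τ ∧ τ < 1 ∧ 0 ≤ z ∧ z ≤ x ∧
      c = (1 - τ) * Lf ((x - z) / (1 - τ)) (y / (1 - τ)) + τ * Lr pq (z / τ)} ∪
    (if y = 0 then {Lr pq x} else ∅)

/-- The value function `J(x,y)`, extended evenly in `x`. -/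
def J (pq : ℝ → ℝ) (x y : ℝ) : ℝ := sInf (Jset pq |x| y)
/-- The field Hamiltonian `H_f(q,p) = q² + p² + 1`. -/
def Hf (q p : ℝ) : ℝ := q ^ 2 + p ^ 2 + 1

/-- The road boundary Hamiltonian `F₀(q,p) = Dq² − μp/(κν + p)`. -/
def F0 (D μ ν κ q p : ℝ) : ℝ := D * q ^ 2 - μ * p / (κ * ν + p)

/-- The spreading speed along the road, `inf_{q>0} H_r(q)/q`. -/
def roadSpeed (pq : ℝ → ℝ) : ℝ := sInf ((fun q => Hr pq q / q) '' Set.Ioi (0 : ℝ))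

/-- The directional spreading speed in direction `ϑ` (measured from the
positive `y`-axis). -/
def cstar (pq : ℝ → ℝ) (ϑ : ℝ) : ℝ :=
  sSup {r : ℝ | 0 ≤ r ∧ J pq (r * Real.sin ϑ) (r * Real.cos ϑ) ≤ 0}

/-- Reflection across the line through the origin in direction `(cos a, sin a)`. -/
def Psi (a : ℝ) (p : ℝ × ℝ) : ℝ × ℝ :=
  (p.1 * Real.cos (2 * a) + p.2 * Real.sin (2 * a),
   p.1 * Real.sin (2 * a) - p.2 * Real.cos (2 * a))

/-- The closed cone of opening angle `2a` between the positive `x`-axis and the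
ray at angle `π/2 − 2a` from the positive `y`-axis. -/
def coneA (a : ℝ) : Set (ℝ × ℝ) :=
  {p | ∃ r ϑ : ℝ, 0 ≤ r ∧ π / 2 - 2 * a ≤ ϑ ∧ ϑ ≤ π / 2 ∧
    p = (r * Real.sin ϑ, r * Real.cos ϑ)}

set_option maxHeartbeats 1000000 in
/-- Two-sided bound on the road speed:
`2√D/(2+μ) ≤ inf_{q>0} H_r(q)/q ≤ D/√(D−1)`. -/
theorem roadSpeed_bounds
    (D μ ν κ : ℝ) (hD : 1 < D) (hμ : 0 < μ) (hν : 0 < ν) (hκ : 0 < κ)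
    (pq : ℝ → ℝ) (hpq : IsCriticalSlope D μ ν κ pq) :
    2 * Real.sqrt D / (2 + μ) ≤ roadSpeed pq ∧
      roadSpeed pq ≤ D / Real.sqrt (D - 1) := by
  have hD0 : (0:ℝ) < D := by linarith
  have hD1 : (0:ℝ) < D - 1 := by linarith
  set c := 2 * Real.sqrt D / (2 + μ) with hcdef
  have hs0 : (0:ℝ) ≤ Real.sqrt D := Real.sqrt_nonneg D
  have hsD : Real.sqrt D ^ 2 = D := Real.sq_sqrt hD0.le
  have h2μ : (0:ℝ) < 2 + μ := by linarith
  -- lower bound on each element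
  have hlb : ∀ x ∈ (fun q => Hr pq q / q) '' Set.Ioi (0:ℝ), c ≤ x := by
    rintro x ⟨q, hq, rfl⟩
    simp only [Set.mem_Ioi] at hq
    rw [le_div_iff₀ hq]
    obtain ⟨h1, h2⟩ := hpq q
    by_cases hcase : (D-1) * q^2 ≤ 1
    · have hp0 := h1 hcase
      rw [Hr, hp0]
      have hsq : Real.sqrt D * q ≤ q^2 + 1 := by
        nlinarith [sq_nonneg (Real.sqrt D * q - (q^2+1)), sq_nonneg q]
      have hcs : c ≤ Real.sqrt D := by
        rw [hcdef, div_le_iff₀ h2μ]; nlinarith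
      nlinarith [mul_le_mul_of_nonneg_right hcs hq.le]
    · push_neg at hcase
      obtain ⟨hppos, heq⟩ := h2 hcase
      set p := pq q with hpdef
      have hden : (0:ℝ) < κ * ν + p := by positivity
      have hfrac : μ * p / (κ * ν + p) ≤ μ := by
        rw [div_le_iff₀ hden]; nlinarith [mul_pos hμ (mul_pos hκ hν)]
      by_contra hcon
      push_neg at hcon
      rw [Hr] at hcon
      -- q² + 1 < c q
      have hA : q^2 + 1 < c * q := by nlinarith [sq_nonneg p]
      -- D q² − μ < c q
      have hB : D * q^2 - μ < c * q := by
        have hid : q^2 + p^2 + 1 = D * q^2 - μ * p / (κ * ν + p) := by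
          linarith [heq]
        linarith [hcon, hfrac]
      have hcq : 1 < c * q := by nlinarith [sq_nonneg q]
      have hqc : q < c := by nlinarith
      have hDq : D * q < c * (1 + μ) := by
        have h3 : D * q^2 < c * (1+μ) * q := by nlinarith
        nlinarith
      have hcpos : 0 < c := hq.trans hqc
      have hDc : D < c^2 * (1 + μ) := by
        nlinarith [mul_lt_mul_of_pos_right hDq hcpos, mul_lt_mul_of_pos_left hcq hD0]
      have hcmul : c * (2+μ) = 2 * Real.sqrt D := by
        rw [hcdef]; field_simp
      have hc2 : c^2 * (2+μ)^2 = 4 * D := by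
        have : (c * (2+μ))^2 = (2 * Real.sqrt D)^2 := by rw [hcmul]
        nlinarith [this, hsD]
      nlinarith [sq_nonneg μ]
  have hbdd : BddBelow ((fun q => Hr pq q / q) '' Set.Ioi (0:ℝ)) := ⟨c, hlb⟩
  -- the witness q₀
  set q₀ := 1 / Real.sqrt (D-1) with hq0def
  have hsd1 : (0:ℝ) < Real.sqrt (D-1) := Real.sqrt_pos.mpr hD1
  have hsd1sq : Real.sqrt (D-1) ^ 2 = D - 1 := Real.sq_sqrt hD1.le
  have hq0pos : (0:ℝ) < q₀ := by positivity
  have hq0sq : q₀^2 = 1 / (D-1) := by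
    rw [hq0def, div_pow, one_pow, hsd1sq]
  have hpq0 : pq q₀ = 0 := (hpq q₀).1 (by rw [hq0sq]; field_simp; exact le_rfl)
  have hval : Hr pq q₀ / q₀ = D / Real.sqrt (D-1) := by
    have h1 : (1/(D-1) + (0:ℝ)^2 + 1) = D/(D-1) := by
      field_simp
      ring
    rw [Hr, hpq0, hq0sq, hq0def, h1]
    rw [div_eq_div_iff (by positivity) hsd1.ne']
    field_simp
    nlinarith [hsd1sq, hsd1]
  have hmem : D / Real.sqrt (D-1) ∈ (fun q => Hr pq q / q) '' Set.Ioi (0:ℝ) :=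
    ⟨q₀, hq0pos, hval⟩
  constructor
  · exact le_csInf ⟨_, hmem⟩ hlb
  · exact csInf_le hbdd hmem
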